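/- Let B_1, …, B_l be real symmetric n×n matrices satisfying B_iB_j = 0 for all i ≠ j, let G be a real symmetric n×n matrix, let X be a real symmetric n×n matrix, and let z ∈ ℝ^l. If X·(G − Σ_{j=1}^l z_j B_j) = 0 (the matrix product is the zero matrix), then for every i = 1, …, l one has z_i · Tr(B_i² X) = Tr(B_i X G). In particular, if Tr(B_i²X) ≠ 0 for all i, then z is uniquely determined by z_i = Tr(B_i X G)/Tr(B_i² X). -/
import Mathlib


open Matrix BigOperators Finset

/-- Closed-form Lagrange multiplier formula (Lemma 3.1): if `B_i B_j = 0` for `i ≠ j`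
and `X·(G − Σ z j • B j) = 0`, then `z i * Tr(B i² X) = Tr(B i X G)` for every `i`;
in particular, if `Tr(B i² X) ≠ 0` for all `i`, then `z i = Tr(B i X G)/Tr(B i² X)`. -/
theorem multiplier_formula
    (n l : ℕ)
    (B : Fin l → Matrix (Fin n) (Fin n) ℝ) (hB : ∀ j, (B j).IsSymm)
    (hBB : ∀ i j, i ≠ j → B i * B j = 0)
    (G : Matrix (Fin n) (Fin n) ℝ) (hG : G.IsSymm)
    (X : Matrix (Fin n) (Fin n) ℝ) (hX : X.IsSymm)
    (z : Fin l → ℝ)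
    (hXS : X * (G - ∑ j, z j • B j) = 0) :
    (∀ i, z i * (B i * B i * X).trace = (B i * X * G).trace) ∧
    ((∀ i, (B i * B i * X).trace ≠ 0) →
      ∀ i, z i = (B i * X * G).trace / (B i * B i * X).trace) := by
  have key : ∀ i, z i * (B i * B i * X).trace = (B i * X * G).trace := by
    intro i
    have hXG : X * G = ∑ j, z j • (X * B j) := by
      have := sub_eq_zero.mpr (rfl : X * (G - ∑ j, z j • B j) + 0 = X * (G - ∑ j, z j • B j) + 0)
      have h := hXS
      rw [Matrix.mul_sub, sub_eq_zero] at h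
      rw [h, Finset.mul_sum]
      simp [Matrix.mul_smul]
    have h2 : B i * X * G = ∑ j, z j • (B i * X * B j) := by
      calc B i * X * G = B i * (X * G) := by rw [Matrix.mul_assoc]
      _ = B i * ∑ j, z j • (X * B j) := by rw [hXG]
      _ = ∑ j, z j • (B i * X * B j) := by
          rw [Finset.mul_sum]; simp [Matrix.mul_smul, Matrix.mul_assoc]
    have h3 : ∀ j, (B i * X * B j).trace = if j = i then (B i * B i * X).trace else 0 := by
      intro j
      rw [Matrix.trace_mul_comm, ← Matrix.mul_assoc]
      by_cases hji : j = i
      · subst hji; simp [Matrix.trace_mul_comm X (B j * B j)]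
      · rw [hBB j i hji, if_neg hji]; simp
    calc z i * (B i * B i * X).trace
        = ∑ j, z j * (if j = i then (B i * B i * X).trace else 0) := by
          simp [mul_ite, mul_zero]
      _ = ∑ j, z j * (B i * X * B j).trace := by
          refine Finset.sum_congr rfl fun j _ => ?_
          rw [h3 j]
      _ = (B i * X * G).trace := by
          rw [h2, Matrix.trace_sum]
          simp
  refine ⟨key, fun hne i => ?_⟩
  rw [← key i, mul_div_assoc, div_self (hne i), mul_one]
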